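/- Let D be an API-domain and S a multiplicatively closed subset of D not containing 0. Then the localization D_S is an API-domain. If moreover D is quasilocal, then D_S is quasilocal. -/

import Mathlib

/-- `D` is an almost principal ideal (API-) domain: for every nonempty set `S` of nonzero
elements of `D` there is a positive integer `n` such that the ideal generated by the `n`-th
powers of the elements of `S` is principal. -/
def IsAPIDomain (D : Type*) [CommRing D] : Prop :=
  ∀ S : Set D, S.Nonempty → (∀ a ∈ S, a ≠ 0) →
    ∃ n : ℕ, 0 < n ∧ (Ideal.span ((fun a => a ^ n) '' S)).IsPrincipal

/-- In a quasilocal API-domain, powers of any two nonzero elements are comparable. -/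
lemma api_local_dvd {D : Type*} [CommRing D] [IsDomain D] (hD : IsAPIDomain D)
    (hL : IsLocalRing D) {a b : D} (ha : a ≠ 0) (hb : b ≠ 0) :
    ∃ n : ℕ, 0 < n ∧ (a ^ n ∣ b ^ n ∨ b ^ n ∣ a ^ n) := by
  obtain ⟨n, hn, ⟨d, hd⟩⟩ := hD {a, b} ⟨a, by simp⟩ (by rintro x (rfl | rfl) <;> assumption)
  have himg : (fun a => a ^ n) '' {a, b} = {a ^ n, b ^ n} := by
    simp [Set.image_insert_eq]
  rw [himg] at hd
  have hain : a ^ n ∈ Ideal.span ({a ^ n, b ^ n} : Set D) :=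
    Ideal.subset_span (by simp)
  have hbin : b ^ n ∈ Ideal.span ({a ^ n, b ^ n} : Set D) :=
    Ideal.subset_span (by simp)
  rw [hd] at hain hbin
  obtain ⟨a', ha'⟩ := Ideal.mem_span_singleton.mp hain
  obtain ⟨b', hb'⟩ := Ideal.mem_span_singleton.mp hbin
  have hdin : d ∈ Ideal.span ({a ^ n, b ^ n} : Set D) := by
    rw [hd]; exact Ideal.subset_span (by simp)
  obtain ⟨x, y, hxy⟩ := Ideal.mem_span_pair.mp hdin
  have hd0 : d ≠ 0 := by
    rintro rfl
    simp only [zero_mul] at ha'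
    exact pow_ne_zero n ha ha'
  have h1 : x * a' + y * b' = 1 := by
    have : d * (x * a' + y * b') = d * 1 := by
      rw [mul_one]
      calc d * (x * a' + y * b') = x * (d * a') + y * (d * b') := by ring
        _ = x * a ^ n + y * b ^ n := by rw [← ha', ← hb']
        _ = d := hxy
    exact mul_left_cancel₀ hd0 this
  rcases IsLocalRing.isUnit_or_isUnit_of_add_one h1 with h | h
  · refine ⟨n, hn, Or.inl ?_⟩
    have ha'u : IsUnit a' := isUnit_of_mul_isUnit_right h
    obtain ⟨u, hu⟩ := ha'u
    refine ⟨b' * (↑u⁻¹ : Dˣ), ?_⟩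
    have : d = a ^ n * ↑u⁻¹ := by
      rw [ha', ← hu, mul_assoc]
      simp
    rw [hb', this]; ring
  · refine ⟨n, hn, Or.inr ?_⟩
    have hb'u : IsUnit b' := isUnit_of_mul_isUnit_right h
    obtain ⟨u, hu⟩ := hb'u
    refine ⟨a' * (↑u⁻¹ : Dˣ), ?_⟩
    have : d = b ^ n * ↑u⁻¹ := by
      rw [hb', ← hu, mul_assoc]
      simp
    rw [ha', this]; ring

/-- if `D` is an API-domain and `S` is a multiplicatively closed subset not
containing `0`, then `D_S` is an API-domain; and if `D` is quasilocal, so is `D_S`. -/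
theorem stmt_11 (D : Type*) [CommRing D] [IsDomain D] (hD : IsAPIDomain D)
    (S : Submonoid D) (hS : (0 : D) ∉ S) :
    IsAPIDomain (Localization S) ∧ (IsLocalRing D → IsLocalRing (Localization S)) := by
  have hle : S ≤ nonZeroDivisors D := fun s hs =>
    mem_nonZeroDivisors_of_ne_zero (fun h => hS (h ▸ hs))
  set f : D →+* Localization S := algebraMap D (Localization S) with hf
  have hinj : Function.Injective f := IsLocalization.injective _ hle
  have hnt : Nontrivial (Localization S) := hinj.nontrivial
  have hunit : ∀ s : S, IsUnit (f s) := fun s => IsLocalization.map_units _ s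
  -- a representation of every element of the localization
  have hrep : ∀ t : Localization S, ∃ (a : D) (s : S), t * f s = f a := by
    intro t
    obtain ⟨⟨a, s⟩, h⟩ := IsLocalization.mk'_surjective S t
    exact ⟨a, s, by rw [← h]; exact IsLocalization.mk'_spec _ _ _⟩
  choose num den hnd using hrep
  have hteq : ∀ t : Localization S, ∀ u : (Localization S)ˣ, (u : Localization S) = f (den t) →
      t = f (num t) * ↑u⁻¹ := by
    intro t u hu
    rw [Units.eq_mul_inv_iff_mul_eq, hu]
    exact hnd t
  have hnum_ne : ∀ t : Localization S, t ≠ 0 → num t ≠ 0 := by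
    intro t ht h0
    apply ht
    obtain ⟨u, hu⟩ := hunit (den t)
    rw [hteq t u hu, h0, map_zero, zero_mul]
  constructor
  · -- API part
    intro T hT hT0
    set A := num '' T with hA
    obtain ⟨n, hn, ⟨d, hd⟩⟩ := hD A (hT.image _)
      (by rintro _ ⟨t, ht, rfl⟩; exact hnum_ne t (hT0 t ht))
    refine ⟨n, hn, ⟨f d, ?_⟩⟩
    apply le_antisymm
    · rw [Ideal.span_le]
      rintro _ ⟨t, ht, rfl⟩
      rw [SetLike.mem_coe]
      refine Ideal.mem_span_singleton.mpr ?_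
      show f d ∣ t ^ n
      obtain ⟨u, hu⟩ := hunit (den t)
      have hmem : num t ^ n ∈ Ideal.span ((fun a => a ^ n) '' A) :=
        Ideal.subset_span ⟨num t, ⟨t, ht, rfl⟩, rfl⟩
      rw [hd] at hmem
      obtain ⟨c, hc⟩ := Ideal.mem_span_singleton.mp hmem
      refine ⟨f c * (↑u⁻¹ : Localization S) ^ n, ?_⟩
      rw [hteq t u hu, mul_pow, ← map_pow, hc, map_mul, mul_assoc]
    · refine Submodule.span_le.mpr (Set.singleton_subset_iff.mpr ?_)
      rw [SetLike.mem_coe]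
      have hdmem : d ∈ Ideal.span ((fun a => a ^ n) '' A) := by
        rw [hd]; exact Ideal.subset_span rfl
      have hmap : f d ∈ Ideal.map f (Ideal.span ((fun a => a ^ n) '' A)) :=
        Ideal.mem_map_of_mem f hdmem
      rw [Ideal.map_span] at hmap
      have hle2 : Ideal.span (f '' ((fun a => a ^ n) '' A)) ≤
          Ideal.span ((fun a => a ^ n) '' T) := by
        rw [Ideal.span_le]
        rintro _ ⟨_, ⟨_, ⟨t, ht, rfl⟩, rfl⟩, rfl⟩
        rw [SetLike.mem_coe]
        have : f (num t ^ n) = t ^ n * f (den t) ^ n := by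
          rw [map_pow, ← hnd t, mul_pow]
        rw [this]
        exact Ideal.mul_mem_right _ _ (Ideal.subset_span ⟨t, ht, rfl⟩)
      exact hle2 hmap
  · -- quasilocal part
    intro hL
    have key : ∀ x y : Localization S, IsUnit (x + y) →
        (∃ n : ℕ, 0 < n ∧ x ∣ y ^ n) → IsUnit x := by
      rintro x y hxy ⟨n, hn, hdvd⟩
      have h1 : x ∣ (x + y) ^ n - y ^ n := by
        simpa using sub_dvd_pow_sub_pow (x + y) y n
      have h2 : x ∣ (x + y) ^ n := by
        have := dvd_add h1 hdvd
        rwa [sub_add_cancel] at this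
      exact isUnit_of_dvd_unit h2 (hxy.pow n)
    have main : ∀ x y : Localization S, ∀ n : ℕ, 0 < n → num x ^ n ∣ num y ^ n → x ∣ y ^ n := by
      rintro x y n hn ⟨c, hc⟩
      obtain ⟨u, hu⟩ := hunit (den y)
      have hyn : y ^ n = (x ^ n * (f (den x) ^ n * f c)) * ↑(u⁻¹ ^ n) := by
        rw [inv_pow, Units.eq_mul_inv_iff_mul_eq]
        have huv : (↑(u ^ n) : Localization S) = f (den y) ^ n := by
          rw [Units.val_pow_eq_pow_val, hu]
        rw [huv]
        calc y ^ n * f (den y) ^ n = (y * f (den y)) ^ n := (mul_pow _ _ _).symm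
          _ = f (num y) ^ n := by rw [hnd y]
          _ = f (num y ^ n) := by rw [map_pow]
          _ = f (num x ^ n * c) := by rw [hc]
          _ = f (num x) ^ n * f c := by rw [map_mul, map_pow]
          _ = (x * f (den x)) ^ n * f c := by rw [hnd x]
          _ = x ^ n * (f (den x) ^ n * f c) := by rw [mul_pow]; ring
      exact dvd_trans (dvd_pow_self x hn.ne')
        ⟨(f (den x) ^ n * f c) * ↑(u⁻¹ ^ n), by rw [hyn]; ring⟩
    have hdiv : ∀ x y : Localization S, x ≠ 0 → y ≠ 0 →
        ∃ n : ℕ, 0 < n ∧ (x ∣ y ^ n ∨ y ∣ x ^ n) := by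
      intro x y hx hy
      obtain ⟨n, hn, h | h⟩ := api_local_dvd hD hL (hnum_ne x hx) (hnum_ne y hy)
      · exact ⟨n, hn, Or.inl (main x y n hn h)⟩
      · exact ⟨n, hn, Or.inr (main y x n hn h)⟩
    refine IsLocalRing.of_isUnit_or_isUnit_of_isUnit_add (fun x y hxy => ?_)
    by_cases hx : x = 0
    · right; subst hx; simpa using hxy
    by_cases hy : y = 0
    · left; subst hy; simpa using hxy
    obtain ⟨n, hn, h | h⟩ := hdiv x y hx hy
    · exact Or.inl (key x y hxy ⟨n, hn, h⟩)
    · exact Or.inr (key y x (by rwa [add_comm]) ⟨n, hn, h⟩)
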